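/- Let Ψ : ℝ → ℝ satisfy Ψ(h) ≤ M for all h (some M > 0) and Ψ(h)/|h| → −∞ as |h| → ∞. Then for every b > 0 there exists c₀ > b such that for all c ≥ c₀, the least concave majorant of Ψ over ℝ agrees with the least concave majorant of Ψ over [−c,c] at every point h with |h| ≤ b. -/

import Mathlib

/-- The least concave majorant of `f` on the set `S`, evaluated at `x`. -/
noncomputable def lcmaj (S : Set ℝ) (f : ℝ → ℝ) (x : ℝ) : ℝ :=
  sInf {y : ℝ | ∃ g : ℝ → ℝ, ConcaveOn ℝ S g ∧ (∀ z ∈ S, f z ≤ g z) ∧ g x = y}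

private lemma affine_concaveOn (a s h : ℝ) :
    ConcaveOn ℝ Set.univ (fun z => a + s * (z - h)) := by
  refine ⟨convex_univ, ?_⟩
  intro x _ y _ pa pb hpa hpb hab
  simp only [smul_eq_mul]
  apply le_of_eq
  linear_combination (a - s * h) * hab

private lemma tent_concaveOn (A : ℝ) : ConcaveOn ℝ Set.univ (fun z : ℝ => A - |z|) := by
  refine ⟨convex_univ, ?_⟩
  intro x _ y _ a b ha hbn hab
  simp only [smul_eq_mul]
  have h1 : |a * x + b * y| ≤ a * |x| + b * |y| := by
    calc |a * x + b * y| ≤ |a * x| + |b * y| := abs_add_le _ _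
    _ = a * |x| + b * |y| := by
        rw [abs_mul, abs_mul, abs_of_nonneg ha, abs_of_nonneg hbn]
  have h2 : a * A + b * A = A := by rw [← add_mul, hab, one_mul]
  linarith [h1, h2]

private lemma support_line {c h : ℝ} {f : ℝ → ℝ} (hf : ConcaveOn ℝ (Set.Icc (-c) c) f)
    (h1 : -c < h) (h2 : h < c) :
    ∃ s : ℝ,
      (∀ x ∈ Set.Icc (-c) c, f x ≤ f h + s * (x - h)) ∧
      (∀ x, -c ≤ x → x < h → s ≤ (f h - f x) / (h - x)) ∧
      (∀ y, y ≤ c → h < y → (f y - f h) / (y - h) ≤ s) := by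
  set S : Set ℝ := {r | ∃ x, -c ≤ x ∧ x < h ∧ r = (f h - f x) / (h - x)} with hS
  have hne : S.Nonempty := ⟨_, ⟨-c, le_refl _, h1, rfl⟩⟩
  have hlow : ∀ y, y ≤ c → h < y → ∀ r ∈ S, (f y - f h) / (y - h) ≤ r := by
    rintro y hy hhy r ⟨x, hx, hxh, rfl⟩
    exact hf.slope_anti_adjacent ⟨hx, le_of_lt (hxh.trans (hhy.trans_le hy))⟩
      ⟨le_of_lt ((h1.trans hhy)), hy⟩ hxh hhy
  have hbdd : BddBelow S := ⟨(f c - f h) / (c - h), fun r hr => hlow c le_rfl h2 r hr⟩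
  refine ⟨sInf S, ?_, ?_, ?_⟩
  · intro x hx
    rcases lt_trichotomy x h with hlt | heq | hgt
    · have hs := csInf_le hbdd (⟨x, hx.1, hlt, rfl⟩ : _ ∈ S)
      have hpos : (0:ℝ) < h - x := by linarith
      have h3 : sInf S * (h - x) ≤ f h - f x := (le_div_iff₀ hpos).mp hs
      have h4 : sInf S * (x - h) = -(sInf S * (h - x)) := by ring
      linarith
    · subst heq; simp
    · have hs := le_csInf hne (hlow x hx.2 hgt)
      have hpos : (0:ℝ) < x - h := by linarith
      have h3 : f x - f h ≤ sInf S * (x - h) := (div_le_iff₀ hpos).mp hs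
      linarith
  · intro x hx hxh
    exact csInf_le hbdd ⟨x, hx, hxh, rfl⟩
  · intro y hy hhy
    exact le_csInf hne (hlow y hy hhy)

set_option maxHeartbeats 1000000 in
theorem stmt_2 (Ψ : ℝ → ℝ) (M : ℝ) (hM : 0 < M) (hbd : ∀ h, Ψ h ≤ M)
    (hdecay : Filter.Tendsto (fun h => Ψ h / |h|) (Filter.cocompact ℝ) Filter.atBot) :
    ∀ b > 0, ∃ c₀ > b, ∀ c ≥ c₀, ∀ h : ℝ, |h| ≤ b →
      lcmaj Set.univ Ψ h = lcmaj (Set.Icc (-c) c) Ψ h := by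
  intro b hb
  set p : ℝ := b + 1 with hp
  set γ : ℝ := min (Ψ (-p)) (Ψ p) with hγ
  have hγM : γ ≤ M := le_trans (min_le_right _ _) (hbd p)
  set K0 : ℝ := M - γ with hK0
  have hK0nn : 0 ≤ K0 := by rw [hK0]; linarith
  set K : ℝ := K0 + 1 with hK
  have hK1 : 1 ≤ K := by rw [hK]; linarith
  -- extract decay radius
  obtain ⟨R, hR1, hRprop⟩ : ∃ R : ℝ, 1 ≤ R ∧ ∀ x : ℝ, R ≤ |x| → Ψ x ≤ -K * |x| := by
    have hT : Filter.Tendsto (fun h => Ψ h / |h|) Filter.atTop Filter.atBot :=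
      hdecay.mono_left (by rw [cocompact_eq_atBot_atTop]; exact le_sup_right)
    have hB : Filter.Tendsto (fun h => Ψ h / |h|) Filter.atBot Filter.atBot :=
      hdecay.mono_left (by rw [cocompact_eq_atBot_atTop]; exact le_sup_left)
    obtain ⟨R2, hR2⟩ := Filter.eventually_atTop.mp (hT.eventually (Filter.eventually_le_atBot (-K)))
    obtain ⟨R1, hR1⟩ := Filter.eventually_atBot.mp (hB.eventually (Filter.eventually_le_atBot (-K)))
    refine ⟨max 1 (max R2 (-R1)), le_max_left _ _, ?_⟩
    intro x hx
    have hx1 : (1:ℝ) ≤ |x| := le_trans (le_max_left _ _) hx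
    have hdiv : Ψ x / |x| ≤ -K := by
      rcases le_or_gt 0 x with hx0 | hx0
      · have : R2 ≤ x := by
          have := le_trans (le_trans (le_max_left R2 (-R1)) (le_max_right 1 _)) hx
          rwa [abs_of_nonneg hx0] at this
        exact hR2 x this
      · have : x ≤ R1 := by
          have := le_trans (le_trans (le_max_right R2 (-R1)) (le_max_right 1 _)) hx
          rw [abs_of_neg hx0] at this
          linarith
        exact hR1 x this
    have hxpos : (0:ℝ) < |x| := by linarith
    calc Ψ x = Ψ x / |x| * |x| := by field_simp
    _ ≤ -K * |x| := by
        apply mul_le_mul_of_nonneg_right hdiv (abs_nonneg x)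
  refine ⟨max (max (p + 1) R) (K0 * b - γ) + 1, ?_, ?_⟩
  · have := le_trans (le_max_left (p+1) R) (le_max_left _ (K0 * b - γ))
    rw [hp] at this; linarith
  intro c hc h hhb
  obtain ⟨hhb1, hhb2⟩ := abs_le.mp hhb
  have hpc : p < c := by
    have := le_trans (le_trans (le_max_left (p+1) R) (le_max_left _ (K0 * b - γ))) (by linarith : max (max (p + 1) R) (K0 * b - γ) ≤ c - 1)
    linarith
  have hRc : R ≤ c := by
    have := le_trans (le_trans (le_max_right (p+1) R) (le_max_left _ (K0 * b - γ))) (by linarith : max (max (p + 1) R) (K0 * b - γ) ≤ c - 1)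
    linarith
  have hKbc : K0 * b - γ ≤ c := by
    have := le_trans (le_max_right (max (p+1) R) (K0 * b - γ)) (by linarith : max (max (p + 1) R) (K0 * b - γ) ≤ c - 1)
    linarith
  have hbc : b < c := by rw [hp] at hpc; linarith
  have hch1 : -c < h := by linarith
  have hch2 : h < c := by linarith
  have hhmem : h ∈ Set.Icc (-c) c := ⟨hch1.le, hch2.le⟩
  -- the tent, a global concave majorant
  set T : ℝ → ℝ := fun z => (M + R) - |z| with hTdef
  have hT : ConcaveOn ℝ Set.univ T := tent_concaveOn (M + R)
  have hTmaj : ∀ z : ℝ, Ψ z ≤ T z := by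
    intro z
    rcases le_or_gt R |z| with hz | hz
    · have h1 := hRprop z hz
      have h2 : -K * |z| ≤ -|z| := by nlinarith [abs_nonneg z]
      have : (0:ℝ) ≤ M + R := by linarith
      rw [hTdef]; dsimp only; linarith
    · have := hbd z
      rw [hTdef]; dsimp only; linarith
  rw [lcmaj, lcmaj]
  set UnivS : Set ℝ :=
    {y : ℝ | ∃ g : ℝ → ℝ, ConcaveOn ℝ Set.univ g ∧ (∀ z ∈ Set.univ, Ψ z ≤ g z) ∧ g h = y} with hUS
  set IccS : Set ℝ :=
    {y : ℝ | ∃ g : ℝ → ℝ, ConcaveOn ℝ (Set.Icc (-c) c) g ∧ (∀ z ∈ Set.Icc (-c) c, Ψ z ≤ g z) ∧ g h = y} with hIS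
  have hbddU : BddBelow UnivS := by
    refine ⟨Ψ h, ?_⟩
    rintro y ⟨g, _, hgm, rfl⟩
    exact hgm h (Set.mem_univ h)
  have hbddI : BddBelow IccS := by
    refine ⟨Ψ h, ?_⟩
    rintro y ⟨g, _, hgm, rfl⟩
    exact hgm h hhmem
  have hTU : T h ∈ UnivS := ⟨T, hT, fun z _ => hTmaj z, rfl⟩
  have hTI : T h ∈ IccS :=
    ⟨T, hT.subset (Set.subset_univ _) (convex_Icc _ _), fun z _ => hTmaj z, rfl⟩
  apply le_antisymm
  · apply le_csInf ⟨T h, hTI⟩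
    rintro y ⟨g, hgc, hgm, rfl⟩
    -- truncate g by M
    set g' : ℝ → ℝ := fun z => min (g z) M with hg'def
    have hg'c : ConcaveOn ℝ (Set.Icc (-c) c) g' := by
      have h1 := hgc.inf (concaveOn_const M (convex_Icc (-c) c))
      have h2 : (g ⊓ fun _ => M) = g' := by
        funext z; simp [hg'def, Pi.inf_apply]
      rwa [h2] at h1
    have hg'm : ∀ z ∈ Set.Icc (-c) c, Ψ z ≤ g' z := fun z hz => le_min (hgm z hz) (hbd z)
    have hppos : (0:ℝ) < p := by rw [hp]; linarith
    have hpmem : p ∈ Set.Icc (-c) c := ⟨by linarith, hpc.le⟩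
    have hnpmem : -p ∈ Set.Icc (-c) c := ⟨by linarith, by linarith⟩
    have hγp : γ ≤ g' p :=
      le_min (le_trans (min_le_right _ _) (hgm p hpmem)) hγM
    have hγnp : γ ≤ g' (-p) :=
      le_min (le_trans (min_le_left _ _) (hgm (-p) hnpmem)) hγM
    have hγh : γ ≤ g' h := by
      have ha : (0:ℝ) ≤ (p - h) / (2 * p) := by
        apply div_nonneg (by rw [hp]; linarith) (by linarith)
      have hb' : (0:ℝ) ≤ (p + h) / (2 * p) := by
        apply div_nonneg (by rw [hp]; linarith) (by linarith)
      have hp0 : p ≠ 0 := ne_of_gt hppos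
      have hab : (p - h) / (2 * p) + (p + h) / (2 * p) = 1 := by
        field_simp
        ring
      have hkey := hgc.2 hnpmem hpmem ha hb' hab
      have hcomb : ((p - h) / (2 * p)) • (-p) + ((p + h) / (2 * p)) • p = h := by
        simp only [smul_eq_mul]
        field_simp
        ring
      rw [hcomb] at hkey
      have hΨnp : γ ≤ Ψ (-p) := min_le_left _ _
      have hΨp : γ ≤ Ψ p := min_le_right _ _
      have hgnp : γ ≤ g (-p) := le_trans hΨnp (hgm (-p) hnpmem)
      have hgp : γ ≤ g p := le_trans hΨp (hgm p hpmem)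
      have hgh : γ ≤ g h := by
        simp only [smul_eq_mul] at hkey
        nlinarith
      exact le_min hgh hγM
    obtain ⟨s, hsupp, hsle, hsge⟩ := support_line hg'c hch1 hch2
    have hg'hM : g' h ≤ M := min_le_right _ _
    -- slope bounds
    have hsK : s ≤ K0 := by
      have h1 := hsle (-p) (by linarith) (by linarith)
      have hden : (1:ℝ) ≤ h - (-p) := by rw [hp]; linarith
      have hnum : g' h - g' (-p) ≤ K0 := by rw [hK0]; linarith
      have h2 : (g' h - g' (-p)) / (h - (-p)) ≤ K0 := by
        rw [div_le_iff₀ (by linarith)]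
        nlinarith [hnum, hden, hK0nn]
      linarith
    have hsK' : -K0 ≤ s := by
      have h1 := hsge p hpc.le (by linarith)
      have hden : (1:ℝ) ≤ p - h := by rw [hp]; linarith
      have hnum : -K0 ≤ g' p - g' h := by rw [hK0]; linarith
      have h2 : -K0 ≤ (g' p - g' h) / (p - h) := by
        rw [le_div_iff₀ (by linarith)]
        have h3 : -K0 * (p - h) ≤ -K0 * 1 := by
          apply mul_le_mul_of_nonpos_left hden (by linarith)
        linarith
      linarith
    have habs : |s| ≤ K0 := abs_le.mpr ⟨hsK', hsK⟩
    set L : ℝ → ℝ := fun z => g' h + s * (z - h) with hLdef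
    have hLc : ConcaveOn ℝ Set.univ L := affine_concaveOn _ _ _
    have hLmaj : ∀ z ∈ Set.univ, Ψ z ≤ L z := by
      intro z _
      rcases le_or_gt |z| c with hz | hz
      · have hzm : z ∈ Set.Icc (-c) c := by
          obtain ⟨a1, a2⟩ := abs_le.mp hz; exact ⟨a1, a2⟩
        exact le_trans (hg'm z hzm) (hsupp z hzm)
      · have hψ := hRprop z (le_trans hRc hz.le)
        have hzh : |z - h| ≤ |z| + b := by
          have h1 : |z - h| ≤ |z| + |h| := by
            have := abs_add_le z (-h)
            simpa [sub_eq_add_neg] using this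
          linarith
        have h2 : |s * (z - h)| ≤ K0 * (|z| + b) := by
          rw [abs_mul]
          apply mul_le_mul habs hzh (abs_nonneg _) hK0nn
        have h3 : -(K0 * (|z| + b)) ≤ s * (z - h) := by
          have := neg_abs_le (s * (z - h))
          linarith
        have hKz : -K * |z| = -(K0 * |z|) - |z| := by rw [hK]; ring
        have hK0z : K0 * (|z| + b) = K0 * |z| + K0 * b := by ring
        rw [hLdef]; dsimp only
        rw [hKz] at hψ
        rw [hK0z] at h3
        linarith
    have hLmem : L h ∈ UnivS := ⟨L, hLc, hLmaj, rfl⟩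
    have hfin : sInf UnivS ≤ L h := csInf_le hbddU hLmem
    have hLh : L h = g' h := by rw [hLdef]; simp
    calc sInf UnivS ≤ L h := hfin
    _ = g' h := hLh
    _ ≤ g h := min_le_left _ _
  · apply csInf_le_csInf hbddI ⟨T h, hTU⟩
    rintro y ⟨g, hgc, hgm, rfl⟩
    exact ⟨g, hgc.subset (Set.subset_univ _) (convex_Icc _ _),
      fun z _ => hgm z (Set.mem_univ z), rfl⟩
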